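/- Let p be a prime, k a field of characteristic p, R = k[x, y] the polynomial ring in two variables, and f ∈ R such that the partial derivatives ∂f/∂x, ∂f/∂y form a regular sequence in R. Let B = k[x, y, z]/(z^p − f). Then there exist k-derivations D₁, D₂ of B with D₁(x̄) = 0, D₁(ȳ) = 0, D₁(z̄) = 1 and D₂(x̄) = ∂f/∂y, D₂(ȳ) = −∂f/∂x, D₂(z̄) = 0, and the module of k-derivations of B is a free B-module with basis {D₁, D₂}: every k-derivation D of B can be written uniquely as D = a·D₁ + b·D₂ with a, b ∈ B. -/

import Mathlib

open MvPolynomial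

noncomputable section

/-- The ideal `(zᵖ − f) ⊂ k[x, y, z]`, where `f ∈ k[x, y]` is viewed as a polynomial in
`x, y, z` via the inclusion of the first two variables. -/
def zariskiIdeal (p : ℕ) (k : Type*) [Field k] (f : MvPolynomial (Fin 2) k) :
    Ideal (MvPolynomial (Fin 3) k) :=
  Ideal.span {(X 2 : MvPolynomial (Fin 3) k) ^ p - rename Fin.castSucc f}

/-- The coordinate ring `B = k[x, y, z]/(zᵖ − f)` of a Zariski singularity. -/
def ZariskiRing (p : ℕ) (k : Type*) [Field k] (f : MvPolynomial (Fin 2) k) : Type _ :=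
  MvPolynomial (Fin 3) k ⧸ zariskiIdeal p k f

instance (p : ℕ) (k : Type*) [Field k] (f : MvPolynomial (Fin 2) k) :
    CommRing (ZariskiRing p k f) := Ideal.Quotient.commRing _

instance (p : ℕ) (k : Type*) [Field k] (f : MvPolynomial (Fin 2) k) :
    Algebra k (ZariskiRing p k f) := Ideal.Quotient.algebra k

namespace ZTA

variable (p : ℕ) (k : Type*) [Field k] (f : MvPolynomial (Fin 2) k)

/-- the quotient map, with codomain `ZariskiRing` -/
def qmk : MvPolynomial (Fin 3) k →+* ZariskiRing p k f :=
  Ideal.Quotient.mk (zariskiIdeal p k f)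

lemma qmk_eq (a : MvPolynomial (Fin 3) k) :
    qmk p k f a = Ideal.Quotient.mk (zariskiIdeal p k f) a := rfl

/-- the quotient map as an algebra hom, with codomain `ZariskiRing` -/
def qmka : MvPolynomial (Fin 3) k →ₐ[k] ZariskiRing p k f :=
  Ideal.Quotient.mkₐ k (zariskiIdeal p k f)

lemma qmka_eq (a : MvPolynomial (Fin 3) k) : qmka p k f a = qmk p k f a := rfl

lemma qmka_surj : Function.Surjective (qmka p k f) :=
  Ideal.Quotient.mkₐ_surjective k _

lemma qmk_zero_iff (a : MvPolynomial (Fin 3) k) :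
    qmk p k f a = 0 ↔ a ∈ zariskiIdeal p k f :=
  Ideal.Quotient.eq_zero_iff_mem

def phi : MvPolynomial (Fin 3) k ≃ₐ[k] Polynomial (MvPolynomial (Fin 2) k) :=
  (renameEquiv k (finRotate 3)).trans (finSuccEquiv k 2)

lemma phi_X2 : phi k (X 2) = Polynomial.X := by
  simp [phi, renameEquiv_apply, show ((2:Fin 3) + 1 = 0) by decide, finSuccEquiv_X_zero]

lemma phi_Xc (j : Fin 2) : phi k (X (Fin.castSucc j)) = Polynomial.C (X j) := by
  have h : finRotate 3 (Fin.castSucc j) = Fin.succ j := by fin_cases j <;> decide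
  simp only [phi, AlgEquiv.trans_apply, renameEquiv_apply, rename_X, h]
  exact finSuccEquiv_X_succ

lemma phi_rename (q : MvPolynomial (Fin 2) k) :
    phi k (rename Fin.castSucc q) = Polynomial.C q := by
  have : ((phi k).toAlgHom.comp (rename (Fin.castSucc : Fin 2 → Fin 3))) =
      Polynomial.CAlgHom := by
    apply MvPolynomial.algHom_ext
    intro i
    rw [AlgHom.comp_apply, rename_X]
    show phi k (X (Fin.castSucc i)) = Polynomial.CAlgHom (X i)
    rw [phi_Xc]
    rfl
  exact congrArg (fun F => F q) this

def g : Polynomial (MvPolynomial (Fin 2) k) := Polynomial.X ^ p - Polynomial.C f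

lemma phi_u : phi k ((X 2 : MvPolynomial (Fin 3) k) ^ p - rename Fin.castSucc f) = g p k f := by
  rw [map_sub, map_pow, phi_X2, phi_rename]; rfl

lemma g_monic (hp : p ≠ 0) : (g p k f).Monic := Polynomial.monic_X_pow_sub_C f hp

def e : (MvPolynomial (Fin 3) k ⧸ zariskiIdeal p k f) ≃ₐ[k] AdjoinRoot (g p k f) :=
  Ideal.quotientEquivAlg (zariskiIdeal p k f) (Ideal.span {g p k f}) (phi k)
    (by
      rw [zariskiIdeal, Ideal.map_span, Set.image_singleton]
      exact congrArg (fun x => Ideal.span {x}) (phi_u p k f).symm)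

lemma e_mk (a : MvPolynomial (Fin 3) k) :
    e p k f (Ideal.Quotient.mk (zariskiIdeal p k f) a) = AdjoinRoot.mk (g p k f) (phi k a) := rfl

lemma e_rho (r : MvPolynomial (Fin 2) k) :
    e p k f (Ideal.Quotient.mk (zariskiIdeal p k f) (rename Fin.castSucc r)) =
      algebraMap (MvPolynomial (Fin 2) k) (AdjoinRoot (g p k f)) r := by
  rw [e_mk, phi_rename, AdjoinRoot.algebraMap_eq]
  rfl


/-- cancellation in AdjoinRoot -/
lemma ar_cancel (hp : p ≠ 0) (r : MvPolynomial (Fin 2) k) (hr : ∀ s, r * s = 0 → s = 0)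
    (v : AdjoinRoot (g p k f)) (h : r • v = 0) : v = 0 := by
  have hb := (AdjoinRoot.powerBasis' (g_monic p k f hp)).basis.repr.injective
  apply hb
  rw [map_zero]
  refine Finsupp.ext fun i => ?_
  have := congrArg (fun w => (AdjoinRoot.powerBasis' (g_monic p k f hp)).basis.repr w i) h
  simp only [map_smul, Finsupp.smul_apply, smul_eq_mul, map_zero, Finsupp.zero_apply] at this ⊢
  exact hr _ this

/-- syzygy in AdjoinRoot -/
lemma ar_syzygy (hp : p ≠ 0)
    (hreg1 : ∀ r : MvPolynomial (Fin 2) k, pderiv 0 f * r = 0 → r = 0)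
    (hreg2 : ∀ r : MvPolynomial (Fin 2) k,
      pderiv 1 f * r ∈ Ideal.span {pderiv 0 f} → r ∈ Ideal.span {pderiv 0 f})
    (α β : AdjoinRoot (g p k f))
    (h : (pderiv 0 f) • α + (pderiv 1 f) • β = 0) :
    ∃ c : AdjoinRoot (g p k f),
      α = (pderiv 1 f) • c ∧ β = -((pderiv 0 f) • c) := by
  set bas := (AdjoinRoot.powerBasis' (g_monic p k f hp)).basis with hbas
  have hco : ∀ i, pderiv 0 f * bas.repr α i + pderiv 1 f * bas.repr β i = 0 := by
    intro i
    have := congrArg (fun w => bas.repr w i) h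
    simpa using this
  have hmem : ∀ i, bas.repr β i ∈ Ideal.span {pderiv 0 f} := by
    intro i
    apply hreg2
    rw [Ideal.mem_span_singleton']
    exact ⟨-(bas.repr α i), by linear_combination -hco i⟩
  choose c hc using fun i => Ideal.mem_span_singleton'.mp (hmem i)
  refine ⟨bas.repr.symm (Finsupp.equivFunOnFinite.symm fun i => - c i), ?_, ?_⟩
  · apply bas.repr.injective
    refine Finsupp.ext fun i => ?_
    rw [map_smul, Finsupp.smul_apply, smul_eq_mul, LinearEquiv.apply_symm_apply,
      Finsupp.coe_equivFunOnFinite_symm]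
    exact sub_eq_zero.mp (hreg1 _ (by linear_combination hco i + pderiv 1 f * hc i))
  · apply bas.repr.injective
    refine Finsupp.ext fun i => ?_
    rw [map_neg, map_smul, Finsupp.neg_apply, Finsupp.smul_apply, smul_eq_mul,
      LinearEquiv.apply_symm_apply, Finsupp.coe_equivFunOnFinite_symm]
    linear_combination -hc i


/-- the equivalence, with source `ZariskiRing` -/
def eZ : ZariskiRing p k f ≃ₐ[k] AdjoinRoot (g p k f) := e p k f

lemma eZ_mk (a : MvPolynomial (Fin 3) k) :
    eZ p k f (qmk p k f a) = AdjoinRoot.mk (g p k f) (phi k a) := rfl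

lemma eZ_rho (r : MvPolynomial (Fin 2) k) :
    eZ p k f (qmk p k f (rename Fin.castSucc r)) =
      algebraMap (MvPolynomial (Fin 2) k) (AdjoinRoot (g p k f)) r :=
  e_rho p k f r

lemma q_cancel (hp : p ≠ 0) (r : MvPolynomial (Fin 2) k)
    (hr : ∀ s, r * s = 0 → s = 0) (b : ZariskiRing p k f)
    (h : qmk p k f (rename Fin.castSucc r) * b = 0) : b = 0 := by
  have h2 : r • eZ p k f b = 0 := by
    rw [Algebra.smul_def, ← eZ_rho, ← map_mul, h, map_zero]
  have h3 := ar_cancel p k f hp r hr _ h2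
  apply (eZ p k f).injective
  rw [map_zero]
  exact h3

lemma q_syzygy (hp : p ≠ 0)
    (hreg1 : ∀ r : MvPolynomial (Fin 2) k, pderiv 0 f * r = 0 → r = 0)
    (hreg2 : ∀ r : MvPolynomial (Fin 2) k,
      pderiv 1 f * r ∈ Ideal.span {pderiv 0 f} → r ∈ Ideal.span {pderiv 0 f})
    (α β : ZariskiRing p k f)
    (h : qmk p k f (rename Fin.castSucc (pderiv 0 f)) * α +
      qmk p k f (rename Fin.castSucc (pderiv 1 f)) * β = 0) :
    ∃ c : ZariskiRing p k f,
      α = qmk p k f (rename Fin.castSucc (pderiv 1 f)) * c ∧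
      β = -(qmk p k f (rename Fin.castSucc (pderiv 0 f)) * c) := by
  have h2 : pderiv 0 f • eZ p k f α + pderiv 1 f • eZ p k f β = 0 := by
    rw [Algebra.smul_def, Algebra.smul_def, ← eZ_rho, ← eZ_rho, ← map_mul, ← map_mul,
      ← map_add, h, map_zero]
  obtain ⟨c, hc1, hc2⟩ := ar_syzygy p k f hp hreg1 hreg2 _ _ h2
  refine ⟨(eZ p k f).symm c, ?_, ?_⟩
  · apply (eZ p k f).injective
    rw [map_mul, eZ_rho, AlgEquiv.apply_symm_apply, ← Algebra.smul_def]
    exact hc1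
  · apply (eZ p k f).injective
    rw [map_neg, map_mul, eZ_rho, AlgEquiv.apply_symm_apply, ← Algebra.smul_def]
    exact hc2

section Derivs

variable [CharP k p]

lemma pderiv2_rename (q : MvPolynomial (Fin 2) k) :
    pderiv (2 : Fin 3) (rename Fin.castSucc q) = 0 := by
  induction q using MvPolynomial.induction_on with
  | C a => simp
  | add q r hq hr => simp [hq, hr]
  | mul_X q i hq =>
      rw [map_mul, rename_X, pderiv_mul, hq,
        pderiv_X_of_ne (show Fin.castSucc i ≠ 2 by fin_cases i <;> decide)]
      ring

lemma pderiv_c_rename (j : Fin 2) (q : MvPolynomial (Fin 2) k) :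
    pderiv (Fin.castSucc j) (rename (Fin.castSucc : Fin 2 → Fin 3) q) =
      rename Fin.castSucc (pderiv j q) :=
  pderiv_rename (Fin.castSucc_injective 2) j q

lemma natp_zero : ((p : ℕ) : MvPolynomial (Fin 3) k) = 0 := by
  rw [← map_natCast (C : k →+* MvPolynomial (Fin 3) k), CharP.cast_eq_zero, map_zero]

lemma d1_u : pderiv (2 : Fin 3) ((X 2 : MvPolynomial (Fin 3) k) ^ p - rename Fin.castSucc f) = 0 := by
  rw [map_sub, pderiv2_rename, Derivation.leibniz_pow, pderiv_X_self, smul_eq_mul, mul_one,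
    nsmul_eq_mul, natp_zero p k, zero_mul, sub_zero]

/-- the second derivation upstairs -/
def d2 : Derivation k (MvPolynomial (Fin 3) k) (MvPolynomial (Fin 3) k) :=
  rename Fin.castSucc (pderiv 1 f) • pderiv 0 - rename Fin.castSucc (pderiv 0 f) • pderiv 1

lemma d2_apply (a : MvPolynomial (Fin 3) k) :
    d2 k f a = rename Fin.castSucc (pderiv 1 f) * pderiv 0 a
      - rename Fin.castSucc (pderiv 0 f) * pderiv 1 a := rfl

lemma pderiv0_c : (Fin.castSucc (0 : Fin 2)) = (0 : Fin 3) := by decide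
lemma pderiv1_c : (Fin.castSucc (1 : Fin 2)) = (1 : Fin 3) := by decide

lemma pderiv0_u : pderiv (0 : Fin 3) ((X 2 : MvPolynomial (Fin 3) k) ^ p - rename Fin.castSucc f)
    = - rename Fin.castSucc (pderiv 0 f) := by
  rw [map_sub, Derivation.leibniz_pow, pderiv_X_of_ne (show (2:Fin 3) ≠ 0 by decide),
    ← pderiv0_c, pderiv_c_rename]
  simp

lemma pderiv1_u : pderiv (1 : Fin 3) ((X 2 : MvPolynomial (Fin 3) k) ^ p - rename Fin.castSucc f)
    = - rename Fin.castSucc (pderiv 1 f) := by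
  rw [map_sub, Derivation.leibniz_pow, pderiv_X_of_ne (show (2:Fin 3) ≠ 1 by decide),
    ← pderiv1_c, pderiv_c_rename]
  simp

lemma d2_u : d2 k f ((X 2 : MvPolynomial (Fin 3) k) ^ p - rename Fin.castSucc f) = 0 := by
  rw [d2_apply, pderiv0_u, pderiv1_u]
  ring

lemma descend (d : Derivation k (MvPolynomial (Fin 3) k) (MvPolynomial (Fin 3) k))
    (hdu : d ((X 2 : MvPolynomial (Fin 3) k) ^ p - rename Fin.castSucc f) = 0) :
    ∀ x, qmka p k f x = 0 → qmka p k f (d x) = 0 := by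
  intro x hx
  rw [qmka_eq, qmk_zero_iff] at hx ⊢
  obtain ⟨t, ht⟩ := Ideal.mem_span_singleton'.mp hx
  rw [← ht, Derivation.leibniz, hdu, smul_zero, zero_add, smul_eq_mul]
  exact Ideal.mul_mem_right _ _ (Ideal.subset_span (Set.mem_singleton _))

/-- D₁ = ∂/∂z on the quotient -/
def D1 : Derivation k (ZariskiRing p k f) (ZariskiRing p k f) :=
  Derivation.liftOfSurjective (f := qmka p k f)
    (qmka_surj p k f) (descend p k f _ (d1_u p k f))

/-- D₂ on the quotient -/
def D2 : Derivation k (ZariskiRing p k f) (ZariskiRing p k f) :=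
  Derivation.liftOfSurjective (f := qmka p k f)
    (qmka_surj p k f) (descend p k f _ (d2_u p k f))

lemma D1_mk (a : MvPolynomial (Fin 3) k) :
    D1 p k f (qmk p k f a) = qmk p k f (pderiv 2 a) :=
  Derivation.liftOfSurjective_apply (f := qmka p k f)
    (qmka_surj p k f) (descend p k f _ (d1_u p k f)) a

lemma D2_mk (a : MvPolynomial (Fin 3) k) :
    D2 p k f (qmk p k f a) = qmk p k f (d2 k f a) :=
  Derivation.liftOfSurjective_apply (f := qmka p k f)
    (qmka_surj p k f) (descend p k f _ (d2_u p k f)) a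

lemma D1_x : D1 p k f (qmk p k f (X 0)) = 0 := by
  rw [D1_mk, pderiv_X_of_ne (show (0:Fin 3) ≠ 2 by decide), map_zero]

lemma D1_y : D1 p k f (qmk p k f (X 1)) = 0 := by
  rw [D1_mk, pderiv_X_of_ne (show (1:Fin 3) ≠ 2 by decide), map_zero]

lemma D1_z : D1 p k f (qmk p k f (X 2)) = 1 := by
  rw [D1_mk, pderiv_X_self, map_one]

lemma D2_x : D2 p k f (qmk p k f (X 0)) =
    qmk p k f (rename Fin.castSucc (pderiv 1 f)) := by
  rw [D2_mk, d2_apply, pderiv_X_self, pderiv_X_of_ne (show (0:Fin 3) ≠ 1 by decide)]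
  ring_nf

lemma D2_y : D2 p k f (qmk p k f (X 1)) =
    - qmk p k f (rename Fin.castSucc (pderiv 0 f)) := by
  rw [D2_mk, d2_apply, pderiv_X_self, pderiv_X_of_ne (show (1:Fin 3) ≠ 0 by decide)]
  rw [mul_zero, zero_sub, mul_one, map_neg]

lemma D2_z : D2 p k f (qmk p k f (X 2)) = 0 := by
  rw [D2_mk, d2_apply, pderiv_X_of_ne (show (2:Fin 3) ≠ 0 by decide),
    pderiv_X_of_ne (show (2:Fin 3) ≠ 1 by decide)]
  simp

end Derivs


/-- the chain rule for derivations of the quotient ring -/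
lemma chain (D : Derivation k (ZariskiRing p k f) (ZariskiRing p k f))
    (q : MvPolynomial (Fin 2) k) :
    D (qmk p k f (rename Fin.castSucc q)) =
      qmk p k f (rename Fin.castSucc (pderiv 0 q)) *
        D (qmk p k f (X 0)) +
      qmk p k f (rename Fin.castSucc (pderiv 1 q)) *
        D (qmk p k f (X 1)) := by
  induction q using MvPolynomial.induction_on with
  | C a =>
      have h1 : (qmk p k f) (rename Fin.castSucc (C a)) =
          algebraMap k (ZariskiRing p k f) a := by rw [rename_C]; rfl
      rw [h1, Derivation.map_algebraMap]
      simp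
  | add q r hq hr => simp only [map_add, hq, hr]; ring
  | mul_X q i hq =>
      have key : ∀ j : Fin 2,
          D (qmk p k f (X (Fin.castSucc j))) =
          qmk p k f (rename Fin.castSucc (pderiv 0 (X j))) *
            D (qmk p k f (X 0)) +
          qmk p k f (rename Fin.castSucc (pderiv 1 (X j))) *
            D (qmk p k f (X 1)) := by
        intro j
        fin_cases j
        · show D (qmk p k f (X (Fin.castSucc (0:Fin 2)))) =
              qmk p k f (rename Fin.castSucc (pderiv 0 (X (0:Fin 2)))) * D (qmk p k f (X 0)) +
              qmk p k f (rename Fin.castSucc (pderiv 1 (X (0:Fin 2)))) * D (qmk p k f (X 1))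
          rw [pderiv0_c, pderiv_X_self, pderiv_X_of_ne (show (0:Fin 2) ≠ 1 by decide)]
          simp
        · show D (qmk p k f (X (Fin.castSucc (1:Fin 2)))) =
              qmk p k f (rename Fin.castSucc (pderiv 0 (X (1:Fin 2)))) * D (qmk p k f (X 0)) +
              qmk p k f (rename Fin.castSucc (pderiv 1 (X (1:Fin 2)))) * D (qmk p k f (X 1))
          rw [pderiv1_c, pderiv_X_self, pderiv_X_of_ne (show (1:Fin 2) ≠ 0 by decide)]
          simp
      rw [map_mul, rename_X, map_mul, Derivation.leibniz, smul_eq_mul, smul_eq_mul, hq, key i]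
      simp only [pderiv_mul, map_add, map_mul, rename_X]
      ring

/-- derivations agreeing on the three generators agree -/
lemma derivation_ext (D E : Derivation k (ZariskiRing p k f) (ZariskiRing p k f))
    (h : ∀ i : Fin 3, D (qmk p k f (X i)) = E (qmk p k f (X i))) : D = E := by
  apply Derivation.ext_of_adjoin_eq_top
    (s := Set.range fun i : Fin 3 =>
      qmk p k f (X i))
  · have h1 : (Set.range fun i : Fin 3 =>
        qmk p k f (X i)) =
        (qmka p k f) '' Set.range X := by
      rw [← Set.range_comp]; rfl
    rw [h1, ← AlgHom.map_adjoin, adjoin_range_X, Algebra.map_top]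
    exact (AlgHom.range_eq_top _).mpr (qmka_surj p k f)
  · rintro x ⟨i, rfl⟩; exact h i

end ZTA

/-- **The tangent module of a Zariski singularity is free of rank 2.** Let `p` be a prime,
`k` a field of characteristic `p`, and `f ∈ k[x, y]` with `(∂f/∂x, ∂f/∂y)` a regular
sequence. In `B = k[x, y, z]/(zᵖ − f)` there are derivations `D₁ = ∂/∂z` and
`D₂ = (∂f/∂y)∂/∂x − (∂f/∂x)∂/∂y`, and every `k`-derivation of `B` is uniquely
`a·D₁ + b·D₂` with `a, b ∈ B`. -/

theorem zariski_singularity_tangent_module_free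
    (p : ℕ) (hp : p.Prime) (k : Type*) [Field k] [CharP k p]
    (f : MvPolynomial (Fin 2) k)
    (hreg1 : ∀ r : MvPolynomial (Fin 2) k, pderiv 0 f * r = 0 → r = 0)
    (hreg2 : ∀ r : MvPolynomial (Fin 2) k,
      pderiv 1 f * r ∈ Ideal.span {pderiv 0 f} → r ∈ Ideal.span {pderiv 0 f}) :
    ∃ D₁ D₂ : Derivation k (ZariskiRing p k f) (ZariskiRing p k f),
      D₁ (Ideal.Quotient.mk (zariskiIdeal p k f) (X 0)) = 0 ∧
      D₁ (Ideal.Quotient.mk (zariskiIdeal p k f) (X 1)) = 0 ∧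
      D₁ (Ideal.Quotient.mk (zariskiIdeal p k f) (X 2)) = 1 ∧
      D₂ (Ideal.Quotient.mk (zariskiIdeal p k f) (X 0)) =
        Ideal.Quotient.mk (zariskiIdeal p k f) (rename Fin.castSucc (pderiv 1 f)) ∧
      D₂ (Ideal.Quotient.mk (zariskiIdeal p k f) (X 1)) =
        - Ideal.Quotient.mk (zariskiIdeal p k f) (rename Fin.castSucc (pderiv 0 f)) ∧
      D₂ (Ideal.Quotient.mk (zariskiIdeal p k f) (X 2)) = 0 ∧
      ∀ D : Derivation k (ZariskiRing p k f) (ZariskiRing p k f),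
        ∃! ab : ZariskiRing p k f × ZariskiRing p k f, D = ab.1 • D₁ + ab.2 • D₂ := by
  refine ⟨ZTA.D1 p k f, ZTA.D2 p k f, ZTA.D1_x p k f, ZTA.D1_y p k f, ZTA.D1_z p k f,
    ZTA.D2_x p k f, ZTA.D2_y p k f, ZTA.D2_z p k f, ?_⟩
  intro D
  have hu : ZTA.qmk p k f ((X 2 : MvPolynomial (Fin 3) k) ^ p - rename Fin.castSucc f) = 0 :=
    (ZTA.qmk_zero_iff p k f _).mpr (Ideal.subset_span (Set.mem_singleton _))
  have hcon : ZTA.qmk p k f (rename Fin.castSucc (pderiv 0 f)) * D (ZTA.qmk p k f (X 0)) +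
      ZTA.qmk p k f (rename Fin.castSucc (pderiv 1 f)) * D (ZTA.qmk p k f (X 1)) = 0 := by
    have h1 : (ZTA.qmk p k f (X 2)) ^ p - ZTA.qmk p k f (rename Fin.castSucc f) = 0 := by
      rw [← map_pow, ← map_sub]; exact hu
    have h2 := congrArg D h1
    rw [map_sub, map_zero] at h2
    have h3 : D ((ZTA.qmk p k f (X 2)) ^ p) = 0 := by
      rw [Derivation.leibniz_pow]
      have hp0 : ((p : ℕ) : ZariskiRing p k f) = 0 := by
        rw [← map_natCast (algebraMap k (ZariskiRing p k f)), CharP.cast_eq_zero, map_zero]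
      rw [nsmul_eq_mul, hp0, zero_mul]
    rw [h3, zero_sub, neg_eq_zero, ZTA.chain p k f D f] at h2
    exact h2
  obtain ⟨c, hc1, hc2⟩ := ZTA.q_syzygy p k f hp.ne_zero hreg1 hreg2 _ _ hcon
  have hexp : ∀ (a b : ZariskiRing p k f) (x : ZariskiRing p k f),
      (a • ZTA.D1 p k f + b • ZTA.D2 p k f) x =
        a * (ZTA.D1 p k f x) + b * (ZTA.D2 p k f x) := by
    intro a b x
    rw [Derivation.add_apply, Derivation.smul_apply, Derivation.smul_apply, smul_eq_mul,
      smul_eq_mul]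
  refine ⟨(D (ZTA.qmk p k f (X 2)), c), ?_, ?_⟩
  · apply ZTA.derivation_ext
    intro i
    have h0 : D (ZTA.qmk p k f (X 0)) =
        (D (ZTA.qmk p k f (X 2)) • ZTA.D1 p k f + c • ZTA.D2 p k f) (ZTA.qmk p k f (X 0)) := by
      rw [hexp, ZTA.D1_x, ZTA.D2_x, mul_zero, zero_add, mul_comm]
      exact hc1
    have h1 : D (ZTA.qmk p k f (X 1)) =
        (D (ZTA.qmk p k f (X 2)) • ZTA.D1 p k f + c • ZTA.D2 p k f) (ZTA.qmk p k f (X 1)) := by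
      rw [hexp, ZTA.D1_y, ZTA.D2_y, mul_zero, zero_add, hc2]
      ring
    have h2 : D (ZTA.qmk p k f (X 2)) =
        (D (ZTA.qmk p k f (X 2)) • ZTA.D1 p k f + c • ZTA.D2 p k f) (ZTA.qmk p k f (X 2)) := by
      rw [hexp, ZTA.D1_z, ZTA.D2_z, mul_zero, mul_one, add_zero]
    fin_cases i
    · exact h0
    · exact h1
    · exact h2
  · rintro ⟨a', b'⟩ hab
    have hz := congrArg (fun E : Derivation k (ZariskiRing p k f) (ZariskiRing p k f) =>
      E (ZTA.qmk p k f (X 2))) hab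
    simp only at hz
    rw [hexp, ZTA.D1_z, ZTA.D2_z, mul_one, mul_zero, add_zero] at hz
    have hy := congrArg (fun E : Derivation k (ZariskiRing p k f) (ZariskiRing p k f) =>
      E (ZTA.qmk p k f (X 1))) hab
    simp only at hy
    rw [hexp, ZTA.D1_y, ZTA.D2_y, mul_zero, zero_add, hc2] at hy
    have hbc : ZTA.qmk p k f (rename Fin.castSucc (pderiv 0 f)) * (b' - c) = 0 := by
      rw [mul_sub]
      linear_combination hy
    have := ZTA.q_cancel p k f hp.ne_zero (pderiv 0 f) hreg1 _ hbc
    have hb : b' = c := by linear_combination this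
    refine Prod.ext ?_ ?_
    · exact hz.symm
    · exact hb

end
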